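/- arXiv:2602.10357 — 2 statements merged into one kernel-verified Lean document; each statement's English description precedes it below -/
import Mathlib

section
/- Let d ≤ d₁ be positive integers, let M be a real d₁ × d matrix with Mᵀ M = I_d, and let Z be a random vector in ℝ^{d₁} with independent N(0,1) coordinates. Then for every ε ∈ (0,1): P( |‖M Mᵀ Z‖₂² − d| ≥ ε d ) ≤ 2·exp(−d ε²/8). -/
open MeasureTheory ProbabilityTheory Matrix Real


lemma aux_mono_one_add (v : ℝ) (hv : 0 ≤ v) :
    Real.exp (v - v ^ 2 / 2) ≤ 1 + v := by
  have hderiv : ∀ x : ℝ, HasDerivAt (fun u : ℝ => (1 + u) * Real.exp (u ^ 2 / 2 - u))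
      (Real.exp (x ^ 2 / 2 - x) * x ^ 2) x := by
    intro x
    have h1 : HasDerivAt (fun u : ℝ => 1 + u) 1 x := (hasDerivAt_id x).const_add 1
    have h2 : HasDerivAt (fun u : ℝ => u ^ 2 / 2 - u) (x - 1) x := by
      have := ((hasDerivAt_pow 2 x).div_const 2).sub (hasDerivAt_id x)
      exact this.congr_deriv (by norm_num)
    have h3 := h2.exp
    have := h1.mul h3
    exact this.congr_deriv (by ring)
  have hmono : MonotoneOn (fun u : ℝ => (1 + u) * Real.exp (u ^ 2 / 2 - u)) (Set.Ici 0) := by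
    refine monotoneOn_of_deriv_nonneg (convex_Ici 0) ?_ ?_ ?_
    · exact Continuous.continuousOn (by continuity)
    · exact fun x _ => (hderiv x).differentiableAt.differentiableWithinAt
    · intro x hx
      rw [(hderiv x).deriv]
      positivity
  have h0 : (1 : ℝ) ≤ (1 + v) * Real.exp (v ^ 2 / 2 - v) := by
    have := hmono (Set.self_mem_Ici) (Set.mem_Ici.2 hv) hv
    simpa using this
  have hE : 0 < Real.exp (v ^ 2 / 2 - v) := Real.exp_pos _
  rw [show v - v ^ 2 / 2 = -(v ^ 2 / 2 - v) by ring, Real.exp_neg,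
    inv_le_iff_one_le_mul₀ hE]
  linarith [h0]

lemma aux_inv_le (u : ℝ) (h0 : 0 ≤ u) (h1 : u ≤ 1 / 2) :
    (1 - u)⁻¹ ≤ Real.exp (u + u ^ 2) := by
  have hderiv : ∀ x : ℝ, HasDerivAt (fun t : ℝ => (1 - t) * Real.exp (t + t ^ 2))
      (Real.exp (x + x ^ 2) * (x - 2 * x ^ 2)) x := by
    intro x
    have h1 : HasDerivAt (fun t : ℝ => 1 - t) (-1) x := by
      simpa using (hasDerivAt_id x).const_sub 1
    have h2 : HasDerivAt (fun t : ℝ => t + t ^ 2) (1 + 2 * x) x := by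
      have := (hasDerivAt_id x).add (hasDerivAt_pow 2 x)
      exact this.congr_deriv (by norm_num)
    have := h1.mul h2.exp
    exact this.congr_deriv (by ring)
  have hmono : MonotoneOn (fun t : ℝ => (1 - t) * Real.exp (t + t ^ 2)) (Set.Icc 0 (1/2)) := by
    refine monotoneOn_of_deriv_nonneg (convex_Icc 0 (1/2)) ?_ ?_ ?_
    · exact Continuous.continuousOn (by continuity)
    · exact fun x _ => (hderiv x).differentiableAt.differentiableWithinAt
    · intro x hx
      rw [interior_Icc] at hx
      rw [(hderiv x).deriv]
      have hx0 : 0 < x := hx.1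
      have hx2 : x < 1/2 := hx.2
      have : 0 ≤ x - 2 * x ^ 2 := by nlinarith
      positivity
  have h0' : (1 : ℝ) ≤ (1 - u) * Real.exp (u + u ^ 2) := by
    have := hmono (Set.mem_Icc.2 ⟨le_refl 0, by norm_num⟩) (Set.mem_Icc.2 ⟨h0, h1⟩) h0
    simpa using this
  have hu : 0 < 1 - u := by linarith
  rw [inv_le_iff_one_le_mul₀ hu]
  linarith [h0']



lemma lintegral_pi_prod {n : ℕ} (ν : Measure ℝ) [SigmaFinite ν]
    (f : Fin n → ℝ → ENNReal) (hf : ∀ i, Measurable (f i)) :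
    ∫⁻ x, ∏ i, f i (x i) ∂(Measure.pi fun _ : Fin n => ν) = ∏ i, ∫⁻ x, f i x ∂ν := by
  induction n with
  | zero =>
      rw [Measure.pi_of_empty]
      simp
  | succ n ih =>
      have h := (measurePreserving_piFinSuccAbove (fun _ : Fin (n + 1) => ν) 0).symm
      have hmeas : Measurable fun x : Fin (n + 1) → ℝ => ∏ i, f i (x i) := by
        exact Finset.measurable_prod _ fun i _ => (hf i).comp (measurable_pi_apply i)
      rw [← h.lintegral_comp hmeas]
      have heq : ∀ p : ℝ × (Fin n → ℝ),
          (∏ i, f i ((MeasurableEquiv.piFinSuccAbove (fun _ => ℝ) 0).symm p i))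
            = f 0 p.1 * ∏ j : Fin n, f j.succ (p.2 j) := by
        intro p
        rw [Fin.prod_univ_succ]
        simp [MeasurableEquiv.piFinSuccAbove_symm_apply, Fin.insertNthEquiv,
          Fin.insertNth_zero, Fin.zero_succAbove]
      simp only [Function.comp_def, heq]
      have hprod := lintegral_prod_mul (μ := ν) (ν := Measure.pi fun _ : Fin n => ν)
        (f := f 0) (g := fun y : Fin n → ℝ => ∏ j : Fin n, f j.succ (y j))
        ((hf 0).aemeasurable)
        ((Finset.measurable_prod _ fun j _ =>
          (hf j.succ).comp (measurable_pi_apply j)).aemeasurable)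
      refine hprod.trans ?_
      rw [Fin.prod_univ_succ]
      congr 1
      exact ih (fun j => f j.succ) (fun j => hf j.succ)


lemma gaussian_mgf_sq (t : ℝ) (ht : t < 1/2) :
    ∫⁻ x, ENNReal.ofReal (Real.exp (t * x ^ 2)) ∂gaussianReal 0 1
      = ENNReal.ofReal (Real.sqrt (1 - 2 * t)⁻¹) := by
  have hb : 0 < 1/2 - t := by linarith
  rw [gaussianReal_of_var_ne_zero 0 one_ne_zero,
    lintegral_withDensity_eq_lintegral_mul _ (measurable_gaussianPDF 0 1)
      (by fun_prop : Measurable fun x : ℝ => ENNReal.ofReal (Real.exp (t * x ^ 2)))]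
  have key : ∀ x : ℝ, (gaussianPDF 0 1 x * ENNReal.ofReal (Real.exp (t * x ^ 2)))
      = ENNReal.ofReal ((Real.sqrt (2 * π))⁻¹ * Real.exp (-(1/2 - t) * x ^ 2)) := by
    intro x
    rw [gaussianPDF, ← ENNReal.ofReal_mul (gaussianPDFReal_nonneg 0 1 x)]
    congr 1
    simp only [gaussianPDFReal, NNReal.coe_one, mul_one, sub_zero]
    rw [mul_assoc, ← Real.exp_add]
    congr 2
    ring
  simp only [Pi.mul_apply, key]
  rw [← ofReal_integral_eq_lintegral_ofReal
    (((integrable_exp_neg_mul_sq hb).const_mul _))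
    (ae_of_all _ fun x => by positivity)]
  rw [MeasureTheory.integral_const_mul, integral_gaussian]
  congr 1
  rw [← Real.sqrt_inv, ← Real.sqrt_mul (by positivity : (0:ℝ) ≤ (2*π)⁻¹)]
  congr 1
  have hπ := Real.pi_pos
  have h1 : (0:ℝ) < 1 - 2 * t := by linarith
  field_simp [Real.pi_ne_zero, h1.ne']


lemma pi_gaussian_eq_withDensity (n : ℕ) :
    (Measure.pi fun _ : Fin n => gaussianReal 0 1) =
      (Measure.pi fun _ : Fin n => (volume : Measure ℝ)).withDensity
        (fun z => ∏ i, gaussianPDF 0 1 (z i)) := by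
  refine Measure.pi_eq fun s hs => ?_
  have hDmeas : Measurable fun z : Fin n → ℝ => ∏ i, gaussianPDF 0 1 (z i) :=
    Finset.measurable_prod _ fun i _ =>
      (measurable_gaussianPDF 0 1).comp (measurable_pi_apply i)
  rw [withDensity_apply _ (MeasurableSet.univ_pi hs), ← lintegral_indicator (MeasurableSet.univ_pi hs)]
  have hind : ∀ z : Fin n → ℝ,
      (Set.univ.pi s).indicator (fun z => ∏ i, gaussianPDF 0 1 (z i)) z
        = ∏ i, (s i).indicator (gaussianPDF 0 1) (z i) := by
    intro z
    by_cases hz : z ∈ Set.univ.pi s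
    · rw [Set.indicator_of_mem hz]
      refine Finset.prod_congr rfl fun i _ => ?_
      rw [Set.indicator_of_mem (hz i (Set.mem_univ i))]
    · rw [Set.indicator_of_notMem hz]
      rw [Set.mem_pi] at hz
      push_neg at hz
      obtain ⟨i, _, hi⟩ := hz
      exact (Finset.prod_eq_zero (Finset.mem_univ i)
        (by rw [Set.indicator_of_notMem hi])).symm
  simp_rw [hind]
  rw [lintegral_pi_prod volume _ (fun i => (measurable_gaussianPDF 0 1).indicator (hs i))]
  refine Finset.prod_congr rfl fun i _ => ?_
  rw [lintegral_indicator (hs i) _, gaussianReal_apply 0 one_ne_zero]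


lemma sum_sq_mulVec {m n : ℕ} (A : Matrix (Fin m) (Fin n) ℝ) (hA : Aᵀ * A = 1)
    (y : Fin n → ℝ) : ∑ i, (A.mulVec y i) ^ 2 = ∑ j, (y j) ^ 2 := by
  have h1 : ∑ i, (A.mulVec y i) ^ 2 = (A.mulVec y) ⬝ᵥ (A.mulVec y) := by
    simp [dotProduct, pow_two]
  have h2 : ∑ j, (y j) ^ 2 = y ⬝ᵥ y := by simp [dotProduct, pow_two]
  rw [h1, h2, dotProduct_mulVec]
  congr 1
  calc (A.mulVec y) ᵥ* A = (A.mulVec y) ᵥ* (Aᵀ)ᵀ := by rw [transpose_transpose]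
    _ = Aᵀ.mulVec (A.mulVec y) := by rw [vecMul_transpose]
    _ = (Aᵀ * A).mulVec y := by rw [mulVec_mulVec]
    _ = y := by rw [hA, one_mulVec]

lemma exists_orthogonal_extension {d d₁ : ℕ} (hdd : d ≤ d₁)
    (M : Matrix (Fin d₁) (Fin d) ℝ) (hM : Mᵀ * M = 1) :
    ∃ O : Matrix (Fin d₁) (Fin d₁) ℝ, Oᵀ * O = 1 ∧
      ∀ (i : Fin d₁) (j : Fin d), O i (Fin.castLE hdd j) = M i j := by
  classical
  set v : Fin d₁ → EuclideanSpace ℝ (Fin d₁) := fun k =>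
    if h : (k : ℕ) < d then (WithLp.equiv 2 (Fin d₁ → ℝ)).symm (fun i => M i ⟨k, h⟩)
    else 0 with hv
  set s : Set (Fin d₁) := {k | (k : ℕ) < d} with hs
  have inner_eq : ∀ x y : EuclideanSpace ℝ (Fin d₁),
      (inner ℝ x y : ℝ) = ∑ i, x i * y i := by
    intro x y
    simp [PiLp.inner_apply, RCLike.inner_apply, conj_trivial, mul_comm]
  have hortho : Orthonormal ℝ (s.restrict v) := by
    rw [orthonormal_iff_ite]
    rintro ⟨a, ha⟩ ⟨b, hb⟩
    have ha' : (a : ℕ) < d := ha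
    have hb' : (b : ℕ) < d := hb
    simp only [Set.restrict_apply, hv, dif_pos ha', dif_pos hb']
    rw [inner_eq]
    have : (∑ i, (WithLp.equiv 2 (Fin d₁ → ℝ)).symm (fun i => M i ⟨a, ha'⟩) i *
        (WithLp.equiv 2 (Fin d₁ → ℝ)).symm (fun i => M i ⟨b, hb'⟩) i)
        = (Mᵀ * M) ⟨a, ha'⟩ ⟨b, hb'⟩ := by
      simp [Matrix.mul_apply, Matrix.transpose_apply]
    simp only [Set.restrict, Set.domRestrict_apply, dif_pos ha', dif_pos hb']
    rw [this, hM, Matrix.one_apply]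
    by_cases hab : a = b
    · subst hab; simp
    · rw [if_neg (by simp [Fin.ext_iff]; exact fun h => hab (by omega)),
        if_neg (by simp [Subtype.ext_iff, Fin.ext_iff]; exact fun h => hab (by omega))]
  obtain ⟨b, hb⟩ := hortho.exists_orthonormalBasis_extension_of_card_eq
    (by simp [finrank_euclideanSpace])
  refine ⟨fun i k => b k i, ?_, ?_⟩
  · ext j k
    have horth := b.orthonormal
    rw [orthonormal_iff_ite] at horth
    have := horth j k
    rw [inner_eq] at this
    simp only [Matrix.mul_apply, Matrix.transpose_apply, Matrix.one_apply]
    exact this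
  · intro i j
    show b (Fin.castLE hdd j) i = M i j
    have hmem : (Fin.castLE hdd j) ∈ s := j.2
    rw [hb _ hmem]
    simp only [hv, dif_pos (show ((Fin.castLE hdd j : Fin d₁) : ℕ) < d from j.2)]
    rfl

lemma measurable_mulVec {n : ℕ} (A : Matrix (Fin n) (Fin n) ℝ) :
    Measurable fun z : Fin n → ℝ => A.mulVec z := by
  refine measurable_pi_lambda _ fun i => ?_
  simpa [Matrix.mulVec, dotProduct] using
    Finset.measurable_sum Finset.univ fun j _ => ((measurable_pi_apply j).const_mul (A i j) (f := fun z : Fin n → ℝ => z j))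


lemma prod_gaussianPDF_eq {n : ℕ} (w : Fin n → ℝ) :
    (∏ i, gaussianPDF 0 1 (w i))
      = ENNReal.ofReal ((Real.sqrt (2 * π))⁻¹ ^ n * Real.exp (-(∑ i, (w i) ^ 2) / 2)) := by
  have h1 : ∀ i : Fin n, gaussianPDFReal 0 1 (w i)
      = (Real.sqrt (2 * π))⁻¹ * Real.exp (-(w i) ^ 2 / 2) := by
    intro i
    simp [gaussianPDFReal]
  simp only [gaussianPDF]
  rw [← ENNReal.ofReal_prod_of_nonneg (fun i _ => gaussianPDFReal_nonneg 0 1 (w i))]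
  congr 1
  simp_rw [h1]
  rw [Finset.prod_mul_distrib, Finset.prod_const, ← Real.exp_sum, Finset.card_univ,
    Fintype.card_fin]
  congr 1
  rw [← Finset.sum_div, ← Finset.sum_neg_distrib]


lemma gaussian_map_orthogonal {n : ℕ} (O : Matrix (Fin n) (Fin n) ℝ) (hO : Oᵀ * O = 1) :
    (Measure.pi fun _ : Fin n => gaussianReal 0 1).map (fun z => Oᵀ.mulVec z)
      = Measure.pi fun _ : Fin n => gaussianReal 0 1 := by
  classical
  have hO' : O * Oᵀ = 1 := mul_eq_one_comm.mp hO
  have hOO : (Oᵀ)ᵀ * Oᵀ = 1 := by rw [transpose_transpose]; exact hO'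
  -- determinant
  have hdet2 : O.det * O.det = 1 := by
    have := congrArg Matrix.det hO
    rwa [Matrix.det_mul, Matrix.det_transpose, Matrix.det_one] at this
  have habs : |(Oᵀ.det)⁻¹| = 1 := by
    rw [Matrix.det_transpose]
    rcases mul_self_eq_one_iff.mp hdet2 with h | h <;> rw [h] <;> norm_num
  have hdet : Oᵀ.det ≠ 0 := by
    rw [Matrix.det_transpose]
    rcases mul_self_eq_one_iff.mp hdet2 with h | h <;> rw [h] <;> norm_num
  -- volume preservation
  have hvol : MeasurePreserving (fun z : Fin n → ℝ => Oᵀ.mulVec z)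
      (Measure.pi fun _ : Fin n => (volume : Measure ℝ))
      (Measure.pi fun _ : Fin n => (volume : Measure ℝ)) := by
    have h := Real.map_matrix_volume_pi_eq_smul_volume_pi hdet
    rw [habs, ENNReal.ofReal_one, one_smul] at h
    have hcoe : (Matrix.toLin' Oᵀ : (Fin n → ℝ) → Fin n → ℝ) = fun z => Oᵀ.mulVec z := by
      funext z
      simp [Matrix.toLin'_apply]
    rw [hcoe] at h
    refine ⟨measurable_mulVec Oᵀ, ?_⟩
    rw [← volume_pi]
    exact h
  -- measurable equiv
  have hemb : MeasurableEmbedding (fun z : Fin n → ℝ => Oᵀ.mulVec z) :=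
    MeasurableEquiv.measurableEmbedding
    { toFun := fun z => Oᵀ.mulVec z
      invFun := fun w => O.mulVec w
      left_inv := fun z => by show O *ᵥ (Oᵀ *ᵥ z) = z; rw [mulVec_mulVec, hO', one_mulVec]
      right_inv := fun w => by show Oᵀ *ᵥ (O *ᵥ w) = w; rw [mulVec_mulVec, hO, one_mulVec]
      measurable_toFun := measurable_mulVec Oᵀ
      measurable_invFun := measurable_mulVec O }
  -- main computation
  ext s hs
  rw [Measure.map_apply (measurable_mulVec Oᵀ) hs]
  rw [pi_gaussian_eq_withDensity n,
    withDensity_apply _ ((measurable_mulVec Oᵀ) hs), withDensity_apply _ hs]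
  have hDT : ∀ z : Fin n → ℝ, (∏ i, gaussianPDF 0 1 (z i))
      = ∏ i, gaussianPDF 0 1 (Oᵀ.mulVec z i) := by
    intro z
    rw [prod_gaussianPDF_eq, prod_gaussianPDF_eq, sum_sq_mulVec Oᵀ hOO z]
  calc ∫⁻ z in (fun z => Oᵀ.mulVec z) ⁻¹' s, ∏ i, gaussianPDF 0 1 (z i)
        ∂(Measure.pi fun _ : Fin n => (volume : Measure ℝ))
      = ∫⁻ z in (fun z => Oᵀ.mulVec z) ⁻¹' s, ∏ i, gaussianPDF 0 1 (Oᵀ.mulVec z i)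
        ∂(Measure.pi fun _ : Fin n => (volume : Measure ℝ)) := by
        refine setLIntegral_congr_fun ((measurable_mulVec Oᵀ) hs) (fun z _ => ?_)
        exact hDT z
    _ = ∫⁻ w in s, ∏ i, gaussianPDF 0 1 (w i)
        ∂(Measure.pi fun _ : Fin n => (volume : Measure ℝ)) :=
        hvol.setLIntegral_comp_preimage_emb hemb (fun w => ∏ i, gaussianPDF 0 1 (w i)) s


lemma gaussian_mgf_sum_sq {n : ℕ} (S : Finset (Fin n)) (t : ℝ) (ht : t < 1/2) :
    ∫⁻ z, ENNReal.ofReal (Real.exp (t * ∑ i ∈ S, z i ^ 2))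
        ∂(Measure.pi fun _ : Fin n => gaussianReal 0 1)
      = ENNReal.ofReal (Real.sqrt (1 - 2 * t)⁻¹ ^ S.card) := by
  classical
  have hptw : ∀ z : Fin n → ℝ,
      ENNReal.ofReal (Real.exp (t * ∑ i ∈ S, z i ^ 2))
        = ∏ i, (fun x : ℝ => if i ∈ S then ENNReal.ofReal (Real.exp (t * x ^ 2)) else 1) (z i) := by
    intro z
    simp only
    rw [Finset.prod_ite_mem, Finset.univ_inter,
      ← ENNReal.ofReal_prod_of_nonneg (fun i _ => (Real.exp_pos _).le)]
    congr 1
    rw [← Real.exp_sum, Finset.mul_sum]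
  simp_rw [hptw]
  have hInt := lintegral_pi_prod (gaussianReal 0 1)
    (fun i x => if i ∈ S then ENNReal.ofReal (Real.exp (t * x ^ 2)) else 1)
    (fun i => by by_cases h : i ∈ S <;> simp only [h, if_true, if_false] <;> fun_prop)
  refine hInt.trans ?_
  have : ∀ i : Fin n, (∫⁻ x, (fun x : ℝ => if i ∈ S then
      ENNReal.ofReal (Real.exp (t * x ^ 2)) else 1) x ∂gaussianReal 0 1)
      = if i ∈ S then ENNReal.ofReal (Real.sqrt (1 - 2 * t)⁻¹) else 1 := by
    intro i
    by_cases h : i ∈ S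
    · simp only [h, if_true]
      exact gaussian_mgf_sq t ht
    · simp [h]
  simp_rw [this]
  rw [Finset.prod_ite_mem, Finset.univ_inter, Finset.prod_const,
    ENNReal.ofReal_pow (Real.sqrt_nonneg _)]


lemma chernoff_tail {n : ℕ} (S : Finset (Fin n)) (t a : ℝ) (ht : t < 1/2) :
    (Measure.pi fun _ : Fin n => gaussianReal 0 1)
        {w : Fin n → ℝ | Real.exp (t * a) ≤ Real.exp (t * ∑ i ∈ S, w i ^ 2)}
      ≤ ENNReal.ofReal (Real.sqrt (1 - 2 * t)⁻¹ ^ S.card / Real.exp (t * a)) := by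
  set μpi := Measure.pi fun _ : Fin n => gaussianReal 0 1 with hμpi
  have hW : Measurable fun w : Fin n → ℝ => ∑ i ∈ S, w i ^ 2 :=
    Finset.measurable_sum S fun i _ => (measurable_pi_apply i).pow_const 2
  set f : (Fin n → ℝ) → ENNReal :=
    fun w => ENNReal.ofReal (Real.exp (t * ∑ i ∈ S, w i ^ 2)) with hf
  have hfmeas : Measurable f := ((hW.const_mul t).exp).ennreal_ofReal
  set c : ENNReal := ENNReal.ofReal (Real.exp (t * a)) with hc
  have hset : {w : Fin n → ℝ | Real.exp (t * a) ≤ Real.exp (t * ∑ i ∈ S, w i ^ 2)}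
      = {w | c ≤ f w} := by
    ext w
    simp only [Set.mem_setOf_eq, hc, hf,
      ENNReal.ofReal_le_ofReal_iff (Real.exp_pos _).le]
  rw [hset]
  have hmarkov := mul_meas_ge_le_lintegral₀ (μ := μpi) hfmeas.aemeasurable c
  rw [hf] at hmarkov
  have hInt : ∫⁻ w, f w ∂μpi = ENNReal.ofReal (Real.sqrt (1 - 2 * t)⁻¹ ^ S.card) :=
    gaussian_mgf_sum_sq S t ht
  have hc0 : c ≠ 0 := by
    simp [hc, ENNReal.ofReal_eq_zero, not_le, Real.exp_pos]
  have hctop : c ≠ ⊤ := ENNReal.ofReal_ne_top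
  have : μpi {w | c ≤ f w} ≤ ENNReal.ofReal (Real.sqrt (1 - 2 * t)⁻¹ ^ S.card) / c := by
    rw [ENNReal.le_div_iff_mul_le (Or.inl hc0) (Or.inl hctop), mul_comm]
    rw [← hInt]
    exact hmarkov
  refine this.trans ?_
  rw [hc, ← ENNReal.ofReal_div_of_pos (Real.exp_pos _)]



open MeasureTheory ProbabilityTheory Matrix

/-- Concentration of the squared norm of the projection `M Mᵀ Z` of a standard
Gaussian vector onto the feature subspace (paper's Lemma B.2(b)). -/
theorem gaussian_projection_norm_sq_concentration
    (d d₁ : ℕ) (hd : 0 < d) (hdd : d ≤ d₁)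
    (M : Matrix (Fin d₁) (Fin d) ℝ) (hM : Mᵀ * M = 1)
    (μ : Measure (Fin d₁ → ℝ))
    (hμ : μ = Measure.pi fun _ : Fin d₁ => gaussianReal 0 1)
    (ε : ℝ) (hε : ε ∈ Set.Ioo (0 : ℝ) 1) :
    μ {z : Fin d₁ → ℝ |
        ε * d ≤ |(∑ i, ((M * Mᵀ).mulVec z i) ^ 2) - d|}
      ≤ ENNReal.ofReal (2 * Real.exp (-(d * ε ^ 2) / 8)) := by
  obtain ⟨hε0, hε1⟩ := hε
  subst hμ
  obtain ⟨O, hO, hOM⟩ := exists_orthogonal_extension hdd M hM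
  classical
  set S : Finset (Fin d₁) := Finset.image (Fin.castLE hdd) Finset.univ with hS
  have hScard : S.card = d := by
    rw [hS, Finset.card_image_of_injective _ (Fin.castLE_injective hdd),
      Finset.card_univ, Fintype.card_fin]
  have hAB : ∀ z : Fin d₁ → ℝ,
      (∑ i, ((M * Mᵀ).mulVec z i) ^ 2) = ∑ i ∈ S, (Oᵀ.mulVec z i) ^ 2 := by
    intro z
    calc ∑ i, ((M * Mᵀ).mulVec z i) ^ 2
        = ∑ i, (M.mulVec (Mᵀ.mulVec z) i) ^ 2 := by rw [mulVec_mulVec]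
      _ = ∑ j, ((Mᵀ.mulVec z) j) ^ 2 := sum_sq_mulVec M hM _
      _ = ∑ j : Fin d, ((Oᵀ.mulVec z) (Fin.castLE hdd j)) ^ 2 := by
          refine Finset.sum_congr rfl fun j _ => ?_
          congr 1
          simp only [Matrix.mulVec, Matrix.transpose_apply, dotProduct]
          exact Finset.sum_congr rfl fun i _ => by rw [hOM i j]
      _ = ∑ i ∈ S, (Oᵀ.mulVec z i) ^ 2 := by
          rw [hS, Finset.sum_image (fun a _ b _ h => Fin.castLE_injective hdd h)]
  set W : (Fin d₁ → ℝ) → ℝ := fun w => ∑ i ∈ S, w i ^ 2 with hW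
  have hWmeas : Measurable W :=
    Finset.measurable_sum S fun i _ => (measurable_pi_apply i).pow_const 2
  have hEvMeas : MeasurableSet {w : Fin d₁ → ℝ | ε * d ≤ |W w - d|} :=
    measurableSet_le measurable_const ((hWmeas.sub measurable_const).abs)
  have hpre : {z : Fin d₁ → ℝ | ε * d ≤ |(∑ i, ((M * Mᵀ).mulVec z i) ^ 2) - d|}
      = (fun z => Oᵀ.mulVec z) ⁻¹' {w : Fin d₁ → ℝ | ε * d ≤ |W w - d|} := by
    ext z
    simp only [Set.mem_setOf_eq, Set.mem_preimage, hAB z, hW]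
  rw [hpre, ← Measure.map_apply (measurable_mulVec Oᵀ) hEvMeas,
    gaussian_map_orthogonal O hO]
  set μpi := Measure.pi fun _ : Fin d₁ => gaussianReal 0 1 with hμpi
  have hsplit : {w : Fin d₁ → ℝ | ε * d ≤ |W w - d|}
      ⊆ {w : Fin d₁ → ℝ | Real.exp ((ε/4) * ((1+ε)*d)) ≤ Real.exp ((ε/4) * W w)}
        ∪ {w : Fin d₁ → ℝ | Real.exp ((-(ε/2)) * ((1-ε)*d)) ≤ Real.exp ((-(ε/2)) * W w)} := by
    intro w hw
    have hw' : ε * d ≤ |W w - d| := hw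
    rcases le_abs.mp hw' with h | h
    · left
      have hWw : (1+ε) * (d:ℝ) ≤ W w := by
        have : (1+ε) * (d:ℝ) = d + ε * d := by ring
        rw [this]; linarith
      exact Real.exp_le_exp.mpr (mul_le_mul_of_nonneg_left hWw (by linarith))
    · right
      have hWw : W w ≤ (1-ε) * (d:ℝ) := by
        have : (1-ε) * (d:ℝ) = d - ε * d := by ring
        rw [this]; linarith
      exact Real.exp_le_exp.mpr (mul_le_mul_of_nonpos_left hWw (by linarith))
  have hup := chernoff_tail S (ε/4) ((1+ε)*d) (by linarith)
  have hlo := chernoff_tail S (-(ε/2)) ((1-ε)*d) (by linarith)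
  have hd0 : (0:ℝ) ≤ d := Nat.cast_nonneg d
  -- the sqrt-exp helper
  have sqrt_le_exp_half : ∀ x y : ℝ, x ≤ Real.exp y → Real.sqrt x ≤ Real.exp (y/2) := by
    intro x y hxy
    have := Real.sqrt_le_sqrt hxy
    rwa [show Real.exp y = Real.exp (y/2) * Real.exp (y/2) by rw [← Real.exp_add]; ring_nf,
      Real.sqrt_mul_self (Real.exp_pos _).le] at this
  have scalar1 : Real.sqrt (1 - 2*(ε/4))⁻¹ ^ S.card / Real.exp ((ε/4) * ((1+ε)*d))
      ≤ Real.exp (-(d * ε ^ 2) / 8) := by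
    rw [hScard]
    have e1 : (1:ℝ) - 2*(ε/4) = 1 - ε/2 := by ring
    rw [e1]
    have h1 : ((1:ℝ) - ε/2)⁻¹ ≤ Real.exp (ε/2 + (ε/2)^2) :=
      aux_inv_le (ε/2) (by linarith) (by linarith)
    have h2 := sqrt_le_exp_half _ _ h1
    have h3 : Real.sqrt (1 - ε/2)⁻¹ ^ d ≤ Real.exp ((ε/2 + (ε/2)^2)/2) ^ d :=
      pow_le_pow_left₀ (Real.sqrt_nonneg _) h2 d
    have h4 : Real.exp ((ε/2 + (ε/2)^2)/2) ^ d = Real.exp (d * ((ε/2 + (ε/2)^2)/2)) :=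
      (Real.exp_nat_mul _ d).symm
    calc Real.sqrt (1 - ε/2)⁻¹ ^ d / Real.exp ((ε/4) * ((1+ε)*d))
        ≤ Real.exp (d * ((ε/2 + (ε/2)^2)/2)) / Real.exp ((ε/4) * ((1+ε)*d)) :=
          (div_le_div_iff_of_pos_right (Real.exp_pos _)).mpr (h3.trans_eq h4)
      _ = Real.exp (d * ((ε/2 + (ε/2)^2)/2) - (ε/4) * ((1+ε)*d)) := (Real.exp_sub _ _).symm
      _ ≤ Real.exp (-(d * ε ^ 2) / 8) := Real.exp_le_exp.mpr (le_of_eq (by ring))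
  have scalar2 : Real.sqrt (1 - 2*(-(ε/2)))⁻¹ ^ S.card / Real.exp ((-(ε/2)) * ((1-ε)*d))
      ≤ Real.exp (-(d * ε ^ 2) / 8) := by
    rw [hScard]
    have e1 : (1:ℝ) - 2*(-(ε/2)) = 1 + ε := by ring
    rw [e1]
    have h1 : ((1:ℝ) + ε)⁻¹ ≤ Real.exp (ε^2/2 - ε) := by
      have hexp : Real.exp (ε - ε^2/2) ≤ 1 + ε := aux_mono_one_add ε hε0.le
      calc ((1:ℝ) + ε)⁻¹ ≤ (Real.exp (ε - ε^2/2))⁻¹ :=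
            inv_anti₀ (Real.exp_pos _) hexp
        _ = Real.exp (-(ε - ε^2/2)) := (Real.exp_neg _).symm
        _ = Real.exp (ε^2/2 - ε) := by ring_nf
    have h2 := sqrt_le_exp_half _ _ h1
    have h3 : Real.sqrt (1 + ε)⁻¹ ^ d ≤ Real.exp ((ε^2/2 - ε)/2) ^ d :=
      pow_le_pow_left₀ (Real.sqrt_nonneg _) h2 d
    have h4 : Real.exp ((ε^2/2 - ε)/2) ^ d = Real.exp (d * ((ε^2/2 - ε)/2)) :=
      (Real.exp_nat_mul _ d).symm
    calc Real.sqrt (1 + ε)⁻¹ ^ d / Real.exp ((-(ε/2)) * ((1-ε)*d))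
        ≤ Real.exp (d * ((ε^2/2 - ε)/2)) / Real.exp ((-(ε/2)) * ((1-ε)*d)) :=
          (div_le_div_iff_of_pos_right (Real.exp_pos _)).mpr (h3.trans_eq h4)
      _ = Real.exp (d * ((ε^2/2 - ε)/2) - (-(ε/2)) * ((1-ε)*d)) := (Real.exp_sub _ _).symm
      _ ≤ Real.exp (-(d * ε ^ 2) / 8) := by
          refine Real.exp_le_exp.mpr ?_
          have hsq : 0 ≤ (d:ℝ) * ε ^ 2 := by positivity
          nlinarith
  calc μpi {w : Fin d₁ → ℝ | ε * d ≤ |W w - d|}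
      ≤ μpi ({w : Fin d₁ → ℝ | Real.exp ((ε/4) * ((1+ε)*d)) ≤ Real.exp ((ε/4) * W w)}
          ∪ {w : Fin d₁ → ℝ | Real.exp ((-(ε/2)) * ((1-ε)*d)) ≤ Real.exp ((-(ε/2)) * W w)}) :=
        measure_mono hsplit
    _ ≤ μpi {w : Fin d₁ → ℝ | Real.exp ((ε/4) * ((1+ε)*d)) ≤ Real.exp ((ε/4) * W w)}
        + μpi {w : Fin d₁ → ℝ | Real.exp ((-(ε/2)) * ((1-ε)*d)) ≤ Real.exp ((-(ε/2)) * W w)} :=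
        measure_union_le _ _
    _ ≤ ENNReal.ofReal (Real.exp (-(d * ε ^ 2) / 8))
        + ENNReal.ofReal (Real.exp (-(d * ε ^ 2) / 8)) := by
        gcongr
        · exact hup.trans (ENNReal.ofReal_le_ofReal scalar1)
        · exact hlo.trans (ENNReal.ofReal_le_ofReal scalar2)
    _ = ENNReal.ofReal (2 * Real.exp (-(d * ε ^ 2) / 8)) := by
        rw [← ENNReal.ofReal_add (Real.exp_pos _).le (Real.exp_pos _).le, two_mul]
end

section
/- Let B be a nonempty finite set, g : B → ℝ, s ∈ B, and δ ∈ [0,1] such that |g(x) − g(s)| ≤ δ for every x ∈ B. Then | e^{g(s)} / Σ_{x∈B} e^{g(x)} − 1/|B| | ≤ 2δ/|B|, where |B| denotes the cardinality of B. -/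
lemma exp_le_one_add_two_mul {δ : ℝ} (h0 : 0 ≤ δ) (h1 : δ ≤ 1) :
    Real.exp δ ≤ 1 + 2 * δ := by
  have hc := convexOn_exp.2 (Set.mem_univ (0:ℝ)) (Set.mem_univ (1:ℝ))
    (by linarith : (0:ℝ) ≤ 1 - δ) h0 (by ring)
  simp [smul_eq_mul] at hc
  have he : Real.exp 1 < 2.7182818286 := Real.exp_one_lt_d9
  nlinarith [hc, he]

/-- Softmax uniformity: when all scores are within `δ` of each other, every
softmax logit is within `2δ/|B|` of the uniform value `1/|B|`
(core of the paper's Lemma H.1). -/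
theorem softmax_near_uniform
    {α : Type*} (B : Finset α) (hB : B.Nonempty)
    (g : α → ℝ) (s : α) (hs : s ∈ B)
    (δ : ℝ) (hδ : δ ∈ Set.Icc (0 : ℝ) 1)
    (h : ∀ x ∈ B, |g x - g s| ≤ δ) :
    |Real.exp (g s) / (∑ x ∈ B, Real.exp (g x)) - 1 / B.card|
      ≤ 2 * δ / B.card := by
  obtain ⟨h0, h1⟩ := hδ
  set S := ∑ x ∈ B, Real.exp (g x) with hSdef
  set n : ℝ := (B.card : ℝ) with hndef
  have hn : 0 < n := by
    rw [hndef]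
    exact_mod_cast Finset.card_pos.mpr hB
  have hS : 0 < S := Finset.sum_pos (fun x _ => Real.exp_pos _) hB
  have hlow : n * Real.exp (g s - δ) ≤ S := by
    have : ∑ _x ∈ B, Real.exp (g s - δ) ≤ S := by
      apply Finset.sum_le_sum
      intro x hx
      exact Real.exp_le_exp.mpr (by have := (abs_le.mp (h x hx)).1; linarith)
    simpa [Finset.sum_const, nsmul_eq_mul] using this
  have hhigh : S ≤ n * Real.exp (g s + δ) := by
    have : S ≤ ∑ _x ∈ B, Real.exp (g s + δ) := by
      apply Finset.sum_le_sum
      intro x hx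
      exact Real.exp_le_exp.mpr (by have := (abs_le.mp (h x hx)).2; linarith)
    simpa [Finset.sum_const, nsmul_eq_mul] using this
  have hprod1 : Real.exp δ * Real.exp (g s - δ) = Real.exp (g s) := by
    rw [← Real.exp_add]; ring_nf
  have hprod2 : Real.exp (-δ) * Real.exp (g s + δ) = Real.exp (g s) := by
    rw [← Real.exp_add]; ring_nf
  have h1' : Real.exp (g s) / S ≤ Real.exp δ / n := by
    rw [div_le_div_iff₀ hS hn]
    nlinarith [Real.exp_pos δ, hlow, hprod1]
  have h2' : Real.exp (-δ) / n ≤ Real.exp (g s) / S := by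
    rw [div_le_div_iff₀ hn hS]
    nlinarith [Real.exp_pos (-δ), hhigh, hprod2]
  have hexp1 : Real.exp δ ≤ 1 + 2 * δ := exp_le_one_add_two_mul h0 h1
  have hexp2 : 1 - δ ≤ Real.exp (-δ) := by
    have := Real.add_one_le_exp (-δ); linarith
  rw [abs_le]
  constructor
  · have hlb : (1 - 2 * δ) / n ≤ Real.exp (g s) / S :=
      le_trans ((div_le_div_iff_of_pos_right hn).mpr (by linarith)) h2'
    rw [neg_le, neg_sub]
    calc 1 / n - Real.exp (g s) / S ≤ 1 / n - (1 - 2 * δ) / n := by linarith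
      _ = 2 * δ / n := by field_simp; ring
  · have : Real.exp (g s) / S ≤ (1 + 2 * δ) / n :=
      le_trans h1' ((div_le_div_iff_of_pos_right hn).mpr hexp1)
    calc Real.exp (g s) / S - 1 / n ≤ (1 + 2 * δ) / n - 1 / n := by linarith
      _ = 2 * δ / n := by field_simp; ring
end
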